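/- Let m be an even positive integer, let e_0 = 1, e_1, …, e_l = m−1 be positive integers with e_i | e_{i+1}, set f_j = (m−1)/e_j, let γ_j ∈ F_{2^{e_j}}, let Q_j(x) = Tr^{m−1}_1( Σ_{i=1}^{(f_j−1)/2} x^{2^{i e_j}+1} ), and for a ∈ F_{2^{m−1}} define f_a(x₁,x₂) = Σ_{j=0}^{l−1} Q_j(γ_j a x₁) + x₂ Tr^{m−1}_1(a x₁). Then for all x₁, z₁ ∈ F_{2^{m−1}} and x₂, z₂ ∈ F_2: f_a(x₁+z₁, x₂+z₂) + f_a(x₁,x₂) + f_a(z₁,z₂) = Tr^{m−1}_1( a z₁ [ Σ_{j=0}^{l−1} ( a γ_j² x₁ + Tr^{m−1}_{e_j}(a γ_j² x₁) ) + x₂ ] ) + Tr^{m−1}_1(a x₁) z₂. -/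

import Mathlib

open Finset

noncomputable section

abbrev Fq (n : ℕ) := GaloisField 2 n

noncomputable instance (n : ℕ) : Fintype (Fq n) := Fintype.ofFinite _

/-- Absolute trace from `F_{2^n}` to `F_2`. -/
noncomputable def tr1 (n : ℕ) (x : Fq n) : ZMod 2 :=
  Algebra.trace (ZMod 2) (Fq n) x

/-- `(-1)^x` for `x : F_2`, as an integer. -/
def chi (x : ZMod 2) : ℤ := (-1 : ℤ) ^ x.val

/-- Walsh transform of a Boolean function on `F_{2^n} × F_2`. -/
noncomputable def walsh (n : ℕ) (f : Fq n × ZMod 2 → ZMod 2)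
    (lam : Fq n) (nu : ZMod 2) : ℤ :=
  ∑ x : Fq n × ZMod 2, chi (f x + tr1 n (lam * x.1) + nu * x.2)

/-- A Boolean function on `F_{2^{m-1}} × F_2` is bent if all its Walsh coefficients
are `± 2^(m/2)`. -/
def IsBent (m : ℕ) (f : Fq (m - 1) × ZMod 2 → ZMod 2) : Prop :=
  ∀ lam nu, walsh (m - 1) f lam nu = 2 ^ (m / 2) ∨ walsh (m - 1) f lam nu = -(2 ^ (m / 2))

/-- Cyclic bent function on `F_{2^{m-1}} × F_2`. -/
def IsCyclicBent (m : ℕ) (f : Fq (m - 1) × ZMod 2 → ZMod 2) : Prop :=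
  ∀ a b : Fq (m - 1), a ≠ b → ∀ ε : ZMod 2,
    IsBent m fun x => f (a * x.1, x.2) + f (b * x.1, x.2 + ε)

/-- The quadratic function `Q_j(x) = Tr^{m-1}_1 (Σ_{i=1}^{(f_j-1)/2} x^{2^{i e_j}+1})`,
where `f_j = (m-1)/e_j`. -/
noncomputable def Qfun (m e : ℕ) (x : Fq (m - 1)) : ZMod 2 :=
  tr1 (m - 1) (∑ i ∈ Finset.Icc 1 (((m - 1) / e - 1) / 2), x ^ (2 ^ (i * e) + 1))

/-- Relative trace `Tr^n_r(x) = Σ_{i=0}^{n/r - 1} x^{2^{r i}}` from `F_{2^n}` onto the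
subfield `F_{2^r}` (for `r ∣ n`), valued in `F_{2^n}`. -/
noncomputable def relTr (n r : ℕ) (x : Fq n) : Fq n :=
  ∑ i ∈ Finset.range (n / r), x ^ 2 ^ (r * i)

/-- The function `f_a(x₁,x₂) = Σ_{j<l} Q_j(γ_j a x₁) + x₂ Tr^{m-1}_1(a x₁)`. -/
noncomputable def fA (m l : ℕ) (e : ℕ → ℕ) (γ : ℕ → Fq (m - 1)) (a : Fq (m - 1))
    (x : Fq (m - 1) × ZMod 2) : ZMod 2 :=
  (∑ j ∈ Finset.range l, Qfun m (e j) (γ j * (a * x.1))) + x.2 * tr1 (m - 1) (a * x.1)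

lemma tr1_add (n : ℕ) (x y : Fq n) : tr1 n (x + y) = tr1 n x + tr1 n y :=
  map_add _ _ _

lemma tr1_sum {α : Type*} (n : ℕ) (s : Finset α) (f : α → Fq n) :
    tr1 n (∑ i ∈ s, f i) = ∑ i ∈ s, tr1 n (f i) :=
  map_sum _ _ _

lemma tr1_frob (n : ℕ) (x : Fq n) : tr1 n (x ^ 2) = tr1 n x := by
  let e : Fq n ≃ₐ[ZMod 2] Fq n :=
    AlgEquiv.ofRingEquiv (f := frobeniusEquiv (Fq n) 2)
      (fun c => by
        simp only [frobeniusEquiv_def, ← map_pow, ZMod.pow_card])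
  have h := Algebra.trace_eq_of_algEquiv e x
  have he : e x = x ^ 2 := rfl
  rw [he] at h
  exact h

lemma tr1_pow_pow (n k : ℕ) (x : Fq n) : tr1 n (x ^ 2 ^ k) = tr1 n x := by
  induction k with
  | zero => simp
  | succ k ih => rw [pow_succ, pow_mul, tr1_frob, ih]

lemma pow_card_fq (n : ℕ) (hn : 0 < n) (x : Fq n) : x ^ 2 ^ n = x := by
  have h := FiniteField.pow_card x
  have hc : Fintype.card (Fq n) = 2 ^ n := by
    rw [← Nat.card_eq_fintype_card]; exact GaloisField.card 2 n hn.ne'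
  rwa [hc] at h

lemma tr1_shift (n k : ℕ) (hn : 0 < n) (hk : k ≤ n) (x z : Fq n) :
    tr1 n (x * z ^ 2 ^ k) = tr1 n (x ^ 2 ^ (n - k) * z) := by
  have h1 : (x * z ^ 2 ^ k) ^ 2 ^ (n - k) = x ^ 2 ^ (n - k) * z := by
    rw [mul_pow, ← pow_mul, ← pow_add, show k + (n - k) = n by omega,
      pow_card_fq n hn]
  rw [← h1, tr1_pow_pow]

lemma relTr_mul (n r : ℕ) (c x : Fq n) (hc : c ^ 2 ^ r = c) :
    relTr n r (c * x) = c * relTr n r x := by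
  have key : ∀ i : ℕ, c ^ 2 ^ (r * i) = c := by
    intro i
    induction i with
    | zero => simp
    | succ i ih =>
        rw [show r * (i + 1) = r * i + r by ring, pow_add, pow_mul, ih, hc]
  unfold relTr
  rw [Finset.mul_sum]
  refine Finset.sum_congr rfl fun i _ => ?_
  rw [mul_pow, key i]

lemma Q_bilinear (m e : ℕ) (hn : 0 < m - 1) (hodd : Odd (m - 1))
    (he : e ∣ m - 1) (he0 : 0 < e) (x z : Fq (m - 1)) :
    Qfun m e (x + z) + Qfun m e x + Qfun m e z
      = tr1 (m - 1) (z * (x + relTr (m - 1) e x)) := by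
  set f := (m - 1) / e with hf
  have hef : e * f = (m - 1) := Nat.mul_div_cancel' he
  have hf0 : 0 < f := Nat.div_pos (Nat.le_of_dvd hn he) he0
  have hfodd : Odd f := (Nat.odd_mul.mp (hef ▸ hodd)).2
  set s := (f - 1) / 2 with hs
  have hfs : f = 2 * s + 1 := by
    rcases hfodd with ⟨t, ht⟩; omega
  have h2 : (2 : Fq (m - 1)) = 0 := by
    have : CharP (Fq (m - 1)) 2 := inferInstance
    exact CharTwo.two_eq_zero
  -- Step A : combine the three Q's
  have stepA : Qfun m e (x + z) + Qfun m e x + Qfun m e z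
      = ∑ i ∈ Finset.Icc 1 s, (tr1 (m - 1) (x ^ 2 ^ (i * e) * z) + tr1 (m - 1) (x * z ^ 2 ^ (i * e))) := by
    unfold Qfun
    rw [← tr1_add, ← tr1_add, ← Finset.sum_add_distrib, ← Finset.sum_add_distrib]
    rw [tr1_sum]
    refine Finset.sum_congr rfl fun i _ => ?_
    rw [← tr1_add]
    congr 1
    rw [pow_succ, pow_succ, pow_succ, add_pow_char_pow]
    ring_nf
    linear_combination (x ^ 2 ^ (i * e) * x + z ^ 2 ^ (i * e) * z) * h2
  rw [stepA]
  -- Step B : shift the second trace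
  have stepB : ∀ i ∈ Finset.Icc 1 s,
      tr1 (m - 1) (x * z ^ 2 ^ (i * e)) = tr1 (m - 1) (x ^ 2 ^ ((f - i) * e) * z) := by
    intro i hi
    simp only [Finset.mem_Icc] at hi
    have hile : i * e ≤ (m - 1) := by
      calc i * e ≤ f * e := Nat.mul_le_mul_right e (by omega)
      _ = (m - 1) := by rw [mul_comm]; exact hef
    rw [tr1_shift (m - 1) (i * e) hn hile]
    have hex : (f - i) * e = (m - 1) - i * e := by
      rw [Nat.sub_mul, mul_comm f e, hef]
    rw [hex]
  rw [Finset.sum_congr rfl (fun i hi => by rw [stepB i hi])]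
  -- reindex and merge
  have reidx : ∑ i ∈ Finset.Icc 1 s, tr1 (m - 1) (x ^ 2 ^ ((f - i) * e) * z)
      = ∑ i ∈ Finset.Icc (s + 1) (f - 1), tr1 (m - 1) (x ^ 2 ^ (i * e) * z) := by
    refine Finset.sum_nbij' (fun i => f - i) (fun i => f - i) ?_ ?_ ?_ ?_ ?_
    · intro i hi; simp only [Finset.mem_Icc] at *; omega
    · intro i hi; simp only [Finset.mem_Icc] at *; omega
    · intro i hi; simp only [Finset.mem_Icc] at *; omega
    · intro i hi; simp only [Finset.mem_Icc] at *; omega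
    · intro i hi; rfl
  rw [Finset.sum_add_distrib, reidx]
  have hIcc : ∀ t : ℕ, Finset.Icc 1 t = Finset.Ioc 0 t := by
    intro t; ext i; simp; omega
  have hIoc2 : Finset.Icc (s + 1) (f - 1) = Finset.Ioc s (f - 1) := Finset.Icc_add_one_left_eq_Ioc s (f - 1)
  rw [hIcc s, hIoc2,
    Finset.sum_Ioc_consecutive _ (Nat.zero_le s) (by omega : s ≤ f - 1)]
  have hrel : z * (x + relTr (m - 1) e x) = ∑ i ∈ Finset.Ioc 0 (f - 1), x ^ 2 ^ (i * e) * z := by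
    have hsplit : relTr (m - 1) e x = x + ∑ i ∈ Finset.Ioc 0 (f - 1), x ^ 2 ^ (i * e) := by
      unfold relTr
      rw [← hf, Finset.range_eq_Ico,
        ← Finset.sum_Ico_consecutive _ (Nat.zero_le 1) (by omega : 1 ≤ f)]
      congr 1
      · simp
      · rw [show f = (f - 1) + 1 by omega, Finset.Ico_add_one_right_eq_Icc, Nat.add_sub_cancel, hIcc (f - 1)]
        exact Finset.sum_congr rfl fun i _ => by rw [mul_comm e i]
    rw [hsplit, ← add_assoc, CharTwo.add_self_eq_zero, zero_add, Finset.mul_sum]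
    exact Finset.sum_congr rfl fun i _ => by ring
  rw [hrel, tr1_sum]

lemma tr1_mul_alg (n : ℕ) (y : Fq n) (c : ZMod 2) :
    tr1 n (y * algebraMap (ZMod 2) (Fq n) c) = c * tr1 n y := by
  have h : c = 0 ∨ c = 1 := by revert c; decide
  rcases h with h | h <;> subst h
  · simp [tr1]
  · simp

lemma zmod2_calc (S1 S2 S3 W trx trz x2 z2 : ZMod 2) (h : S1 + S2 + S3 = W) :
    S1 + (x2 + z2) * (trx + trz) + (S2 + x2 * trx) + (S3 + z2 * trz)
      = W + x2 * trz + trx * z2 := by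
  rw [← h]
  clear h
  revert S1 S2 S3 W trx trz x2 z2
  decide

/-- the symplectic form associated with `f_a`. -/
theorem stmt4 (m l : ℕ) (hm : Even m) (hm0 : 0 < m)
    (e : ℕ → ℕ) (hpos : ∀ i ≤ l, 0 < e i)
    (he0 : e 0 = 1) (hel : e l = m - 1)
    (hdvd : ∀ i < l, e i ∣ e (i + 1))
    (γ : ℕ → Fq (m - 1))
    (hγ : ∀ j < l, γ j ^ (2 ^ e j) = γ j)  -- γ_j ∈ F_{2^{e_j}}
    (a : Fq (m - 1))
    (x₁ z₁ : Fq (m - 1)) (x₂ z₂ : ZMod 2) :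
    fA m l e γ a (x₁ + z₁, x₂ + z₂) + fA m l e γ a (x₁, x₂) + fA m l e γ a (z₁, z₂)
      = tr1 (m - 1) (a * z₁ *
          ((∑ j ∈ Finset.range l,
              (a * γ j ^ 2 * x₁ + relTr (m - 1) (e j) (a * γ j ^ 2 * x₁)))
            + algebraMap (ZMod 2) (Fq (m - 1)) x₂))
        + tr1 (m - 1) (a * x₁) * z₂ := by
  have hn0 : 0 < m - 1 := by obtain ⟨k, hk⟩ := hm; omega
  have hnodd : Odd (m - 1) := by obtain ⟨k, hk⟩ := hm; exact ⟨k - 1, by omega⟩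
  have hchain : ∀ j, j ≤ l → e j ∣ m - 1 := by
    intro j hj
    rw [← hel]
    have key : ∀ t, ∀ j, j + t ≤ l → e j ∣ e (j + t) := by
      intro t
      induction t with
      | zero => intro j _; simp
      | succ t ih =>
          intro j hj
          have h1 := hdvd j (by omega)
          have h2 := ih (j + 1) (by omega)
          have heq : j + (t + 1) = j + 1 + t := by omega
          rw [heq]
          exact dvd_trans h1 h2
    have h := key (l - j) j (by omega)
    rwa [show j + (l - j) = l by omega] at h
  have hper : ∀ j < l,
      Qfun m (e j) (γ j * (a * (x₁ + z₁))) + Qfun m (e j) (γ j * (a * x₁))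
          + Qfun m (e j) (γ j * (a * z₁))
        = tr1 (m - 1) (a * z₁ *
            (a * γ j ^ 2 * x₁ + relTr (m - 1) (e j) (a * γ j ^ 2 * x₁))) := by
    intro j hj
    have harg : γ j * (a * (x₁ + z₁)) = γ j * (a * x₁) + γ j * (a * z₁) := by ring
    rw [harg, Q_bilinear m (e j) hn0 hnodd (hchain j hj.le) (hpos j hj.le)]
    congr 1
    rw [relTr_mul _ _ _ _ (hγ j hj)]
    have h2 : a * γ j ^ 2 * x₁ = γ j * (γ j * (a * x₁)) := by ring
    rw [h2, relTr_mul _ _ _ _ (hγ j hj), relTr_mul _ _ _ _ (hγ j hj)]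
    ring
  have hsum : (∑ j ∈ Finset.range l, Qfun m (e j) (γ j * (a * (x₁ + z₁))))
      + (∑ j ∈ Finset.range l, Qfun m (e j) (γ j * (a * x₁)))
      + (∑ j ∈ Finset.range l, Qfun m (e j) (γ j * (a * z₁)))
      = tr1 (m - 1) (a * z₁ * ∑ j ∈ Finset.range l,
          (a * γ j ^ 2 * x₁ + relTr (m - 1) (e j) (a * γ j ^ 2 * x₁))) := by
    rw [← Finset.sum_add_distrib, ← Finset.sum_add_distrib, Finset.mul_sum, tr1_sum]
    exact Finset.sum_congr rfl fun j hj => hper j (Finset.mem_range.mp hj)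
  have hmul : tr1 (m - 1) (a * (x₁ + z₁)) = tr1 (m - 1) (a * x₁) + tr1 (m - 1) (a * z₁) := by
    rw [mul_add, tr1_add]
  simp only [fA]
  rw [hmul, mul_add (a * z₁), tr1_add, tr1_mul_alg]
  exact zmod2_calc _ _ _ _ _ _ _ _ hsum
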